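/- Let D(z) = Σ_{l=0}^ν p_l(z) e^{i z q_l} where 0 = q_0 < q_1 < … < q_ν are real numbers, ν ≥ 1, p_0 is a polynomial of degree N ≥ 2 with nonzero leading coefficient, and each p_l for 1 ≤ l ≤ ν is a nonzero polynomial of degree at most N − 2. Then there exist constants c₁ > 0 and c₂ ∈ ℝ such that every zero k of D with Im k ≤ 0 satisfies Im k ≤ −c₁ · log(|Re k| + 1) + c₂. -/

import Mathlib

open Complex Real

open Polynomial

lemma eval_upper (p : Polynomial ℂ) (n : ℕ) (hn : p.natDegree ≤ n) :
    ∃ C : ℝ, 0 ≤ C ∧ ∀ k : ℂ, 1 ≤ ‖k‖ → ‖p.eval k‖ ≤ C * ‖k‖ ^ n := by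
  refine ⟨∑ i ∈ Finset.range (p.natDegree + 1), ‖p.coeff i‖,
    Finset.sum_nonneg fun i _ => norm_nonneg _, fun k hk => ?_⟩
  rw [Polynomial.eval_eq_sum_range, Finset.sum_mul]
  refine (norm_sum_le _ _).trans (Finset.sum_le_sum fun i hi => ?_)
  rw [norm_mul, norm_pow]
  refine mul_le_mul_of_nonneg_left ?_ (norm_nonneg _)
  exact pow_le_pow_right₀ hk (le_trans (Nat.lt_succ_iff.mp (Finset.mem_range.mp hi)) hn)

lemma eval_lower (p : Polynomial ℂ) (hp : p ≠ 0) (hd : 1 ≤ p.natDegree) :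
    ∃ R : ℝ, 1 ≤ R ∧ ∀ k : ℂ, R ≤ ‖k‖ →
      ‖p.leadingCoeff‖ / 2 * ‖k‖ ^ p.natDegree ≤ ‖p.eval k‖ := by
  obtain ⟨C, hC0, hC⟩ := eval_upper p.eraseLead (p.natDegree - 1) p.eraseLead_natDegree_le
  have ha : 0 < ‖p.leadingCoeff‖ := norm_pos_iff.mpr (leadingCoeff_ne_zero.mpr hp)
  refine ⟨max 1 (2 * C / ‖p.leadingCoeff‖), le_max_left _ _, fun k hk => ?_⟩
  have hk1 : 1 ≤ ‖k‖ := le_trans (le_max_left _ _) hk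
  have hk0 : (0:ℝ) < ‖k‖ := lt_of_lt_of_le one_pos hk1
  have h2 : 2 * C / ‖p.leadingCoeff‖ ≤ ‖k‖ := le_trans (le_max_right _ _) hk
  have hCk : C ≤ ‖p.leadingCoeff‖ / 2 * ‖k‖ := by
    rw [div_le_iff₀ ha] at h2; nlinarith
  have heval : p.eval k = p.eraseLead.eval k + p.leadingCoeff * k ^ p.natDegree := by
    calc eval k p = eval k (p.eraseLead + Polynomial.C p.leadingCoeff * X ^ p.natDegree) := by
          rw [p.eraseLead_add_C_mul_X_pow]
      _ = _ := by rw [eval_add, eval_mul, eval_C, eval_pow, eval_X]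
  have h3 : ‖p.eraseLead.eval k‖ ≤ C * ‖k‖ ^ (p.natDegree - 1) := hC k hk1
  have hpow : ‖k‖ ^ p.natDegree = ‖k‖ * ‖k‖ ^ (p.natDegree - 1) := by
    conv_lhs => rw [← Nat.sub_add_cancel hd]
    rw [pow_succ']
  have h4 : ‖p.leadingCoeff‖ * ‖k‖ ^ p.natDegree - ‖p.eraseLead.eval k‖ ≤ ‖p.eval k‖ := by
    rw [heval]
    have h5 := norm_sub_norm_le (p.leadingCoeff * k ^ p.natDegree) (-(p.eraseLead.eval k))
    simp only [sub_neg_eq_add, norm_neg, norm_mul, norm_pow] at h5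
    calc ‖p.leadingCoeff‖ * ‖k‖ ^ p.natDegree - ‖p.eraseLead.eval k‖
        ≤ ‖p.leadingCoeff * k ^ p.natDegree + p.eraseLead.eval k‖ := by
          simpa [norm_mul, norm_pow] using h5
      _ = ‖p.eraseLead.eval k + p.leadingCoeff * k ^ p.natDegree‖ := by rw [add_comm]
  have h5 : C * ‖k‖ ^ (p.natDegree - 1) ≤ ‖p.leadingCoeff‖ / 2 * ‖k‖ ^ p.natDegree := by
    rw [hpow]
    calc C * ‖k‖ ^ (p.natDegree - 1)
        ≤ (‖p.leadingCoeff‖ / 2 * ‖k‖) * ‖k‖ ^ (p.natDegree - 1) :=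
          mul_le_mul_of_nonneg_right hCk (pow_nonneg hk0.le _)
      _ = ‖p.leadingCoeff‖ / 2 * (‖k‖ * ‖k‖ ^ (p.natDegree - 1)) := by ring
  linarith

/-- upper logarithmic bound for zeros, lying in the closed lower
half-plane, of the exponential polynomial `D(z) = Σ pₗ(z) e^{i z qₗ}`. -/
theorem stmt1 (N ν : ℕ) (hN : 2 ≤ N) (hν : 1 ≤ ν)
    (q : Fin (ν + 1) → ℝ) (hq0 : q 0 = 0) (hq : StrictMono q)
    (p : Fin (ν + 1) → Polynomial ℂ)
    (hp0 : (p 0).natDegree = N) (hp0ne : p 0 ≠ 0)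
    (hpl : ∀ l : Fin (ν + 1), l ≠ 0 → p l ≠ 0 ∧ (p l).natDegree ≤ N - 2) :
    ∃ c₁ > (0:ℝ), ∃ c₂ : ℝ, ∀ k : ℂ,
      (∑ l, (p l).eval k * Complex.exp (Complex.I * k * (q l : ℂ))) = 0 →
      k.im ≤ 0 →
      k.im ≤ -c₁ * Real.log (|k.re| + 1) + c₂ := by
  have hL0 : (0 : Fin (ν+1)) < Fin.last ν := by
    rw [Fin.lt_def]; simp [Fin.last]; omega
  have hqL : 0 < q (Fin.last ν) := by rw [← hq0]; exact hq hL0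
  set a : ℝ := ‖(p 0).leadingCoeff‖ with ha_def
  have ha : 0 < a := norm_pos_iff.mpr (leadingCoeff_ne_zero.mpr hp0ne)
  obtain ⟨R, hR1, hRlow⟩ := eval_lower (p 0) hp0ne (by rw [hp0]; omega)
  simp only [hp0] at hRlow
  have hCex : ∀ i : Fin ν, ∃ C : ℝ, 0 ≤ C ∧ ∀ k : ℂ, 1 ≤ ‖k‖ →
      ‖(p i.succ).eval k‖ ≤ C * ‖k‖ ^ (N - 2) :=
    fun i => eval_upper _ _ ((hpl i.succ (Fin.succ_ne_zero i)).2)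
  choose C hC0 hC using hCex
  set T : ℝ := 1 + ∑ i, C i with hT_def
  have hT0 : 0 < T := by
    have : (0:ℝ) ≤ ∑ i, C i := Finset.sum_nonneg fun i _ => hC0 i
    rw [hT_def]; linarith
  set c₁ : ℝ := 2 / q (Fin.last ν) with hc₁_def
  have hc₁ : 0 < c₁ := div_pos two_pos hqL
  refine ⟨c₁, hc₁, max ((2 * Real.log 2 - Real.log (a / (2 * T))) / q (Fin.last ν))
      (c₁ * Real.log (R + 1)), fun k hk hkim => ?_⟩
  set c₂ : ℝ := max ((2 * Real.log 2 - Real.log (a / (2 * T))) / q (Fin.last ν))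
      (c₁ * Real.log (R + 1)) with hc₂_def
  have hre : |k.re| ≤ ‖k‖ := Complex.abs_re_le_norm k
  by_cases hkR : ‖k‖ < R
  · -- bounded region: RHS is nonnegative
    have h1 : Real.log (|k.re| + 1) ≤ Real.log (R + 1) :=
      Real.log_le_log (by positivity) (by linarith)
    have h2 : 0 ≤ Real.log (|k.re| + 1) := Real.log_nonneg (by linarith [abs_nonneg k.re])
    have h3 : c₁ * Real.log (|k.re| + 1) ≤ c₂ :=
      le_trans (by nlinarith) (le_max_right _ _)
    linarith
  · push_neg at hkR
    have hk1 : 1 ≤ ‖k‖ := hR1.trans hkR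
    have hk0 : (0:ℝ) < ‖k‖ := by linarith
    set E : ℝ := Real.exp (q (Fin.last ν) * (-k.im)) with hE_def
    have hE0 : 0 < E := Real.exp_pos _
    -- rearrange the zero equation
    have heq : (p 0).eval k
        = -∑ i : Fin ν, (p i.succ).eval k * Complex.exp (Complex.I * k * (q i.succ : ℂ)) := by
      rw [Fin.sum_univ_succ] at hk
      have h0 : Complex.exp (Complex.I * k * ((q 0 : ℝ) : ℂ)) = 1 := by
        rw [hq0]; simp
      rw [h0, mul_one] at hk
      linear_combination hk
    -- upper bound on ‖p₀(k)‖
    have hnorm : ‖(p 0).eval k‖ ≤ ∑ i : Fin ν, ‖(p i.succ).eval k‖ * E := by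
      rw [heq, norm_neg]
      refine (norm_sum_le _ _).trans (Finset.sum_le_sum fun i _ => ?_)
      rw [norm_mul]
      refine mul_le_mul_of_nonneg_left ?_ (norm_nonneg _)
      rw [Complex.norm_exp, hE_def]
      apply Real.exp_le_exp.mpr
      have hre2 : (Complex.I * k * ((q i.succ : ℝ):ℂ)).re = -k.im * q i.succ := by
        simp [Complex.mul_re]
      rw [hre2]
      have h1 : q i.succ ≤ q (Fin.last ν) := hq.monotone (Fin.le_last _)
      nlinarith
    have hsum : ∑ i : Fin ν, ‖(p i.succ).eval k‖ * E ≤ T * ‖k‖ ^ (N - 2) * E := by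
      have hP : (0:ℝ) ≤ ‖k‖ ^ (N - 2) := pow_nonneg hk0.le _
      calc ∑ i : Fin ν, ‖(p i.succ).eval k‖ * E
          ≤ ∑ i : Fin ν, (C i * ‖k‖ ^ (N - 2)) * E :=
            Finset.sum_le_sum fun i _ => mul_le_mul_of_nonneg_right (hC i k hk1) hE0.le
        _ = (∑ i, C i) * ‖k‖ ^ (N - 2) * E := by rw [← Finset.sum_mul, ← Finset.sum_mul]
        _ ≤ T * ‖k‖ ^ (N - 2) * E := by
            have h1 : (∑ i, C i) ≤ T := by rw [hT_def]; linarith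
            have := mul_le_mul_of_nonneg_right (mul_le_mul_of_nonneg_right h1 hP) hE0.le
            linarith
    have hlow := hRlow k hkR
    -- key inequality after cancelling ‖k‖^(N-2)
    have key : a / 2 * ‖k‖ ^ 2 ≤ T * E := by
      have hNsplit : ‖k‖ ^ N = ‖k‖ ^ (N - 2) * ‖k‖ ^ 2 := by
        rw [← pow_add]; congr 1; omega
      have h := le_trans hlow (le_trans hnorm hsum)
      rw [hNsplit] at h
      have hP : (0:ℝ) < ‖k‖ ^ (N - 2) := pow_pos hk0 _
      have h2 : (a / 2 * ‖k‖ ^ 2) * ‖k‖ ^ (N - 2) ≤ (T * E) * ‖k‖ ^ (N - 2) := by nlinarith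
      exact le_of_mul_le_mul_right h2 hP
    -- take logarithms
    have hlogkey : Real.log (a / (2 * T)) + 2 * Real.log ‖k‖ ≤ q (Fin.last ν) * (-k.im) := by
      have h1 : Real.log (a / 2 * ‖k‖ ^ 2) ≤ Real.log (T * E) :=
        Real.log_le_log (by positivity) key
      rw [Real.log_mul (by positivity) (by positivity), Real.log_mul hT0.ne' hE0.ne',
        Real.log_pow, Real.log_exp] at h1
      have h2 : Real.log (a / (2 * T)) = Real.log (a / 2) - Real.log T := by
        rw [← div_div, Real.log_div (by positivity) hT0.ne']
      push_cast at h1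
      linarith
    have hlogk : Real.log (|k.re| + 1) ≤ Real.log 2 + Real.log ‖k‖ := by
      rw [← Real.log_mul two_ne_zero hk0.ne']
      exact Real.log_le_log (by positivity) (by linarith)
    have hmain : k.im ≤ ((2 * Real.log 2 - Real.log (a / (2 * T)))
        - 2 * Real.log (|k.re| + 1)) / q (Fin.last ν) := by
      rw [le_div_iff₀ hqL]
      nlinarith
    have hrw : ((2 * Real.log 2 - Real.log (a / (2 * T)))
        - 2 * Real.log (|k.re| + 1)) / q (Fin.last ν)
        = -c₁ * Real.log (|k.re| + 1)
          + (2 * Real.log 2 - Real.log (a / (2 * T))) / q (Fin.last ν) := by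
      rw [hc₁_def]; ring
    have hc2 : (2 * Real.log 2 - Real.log (a / (2 * T))) / q (Fin.last ν) ≤ c₂ :=
      le_max_left _ _
    rw [hrw] at hmain
    linarith
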